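/- Let ω be a Borel measure on ℝ with ∫_ℝ (1+λ²)^{-1} dω(λ) = 1 and ω(ℝ) = ∞. Let Ĥ be the self-adjoint multiplication operator (Ĥf)(λ) = λf(λ) in L²(ℝ; dω) with dom(Ĥ) = L²(ℝ; (1+λ²)dω), and let Ḣ̂ = Ĥ|_{dom(Ḣ̂)} with dom(Ḣ̂) = {f ∈ dom(Ĥ) : ∫_ℝ f dω = 0}. Then Ḣ̂ is a densely defined, closed, symmetric operator in L²(ℝ; dω) with deficiency indices (1,1), and for every z ∈ ℂ∖ℝ, ker(Ḣ̂* − z) = { c·(λ−z)^{-1} : c ∈ ℂ }. -/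

import Mathlib

open MeasureTheory

/-- Symmetry of an unbounded operator. -/
def PMapSymmetric {H : Type*} [NormedAddCommGroup H] [InnerProductSpace ℂ H]
    (T : H →ₗ.[ℂ] H) : Prop :=
  ∀ u v : T.domain, (inner ℂ (T u) (v : H) : ℂ) = inner ℂ (u : H) (T v)

/-- The deficiency subspace `ker(T* - c)` of a densely defined symmetric operator `T`. -/
def defSpace {H : Type*} [NormedAddCommGroup H] [InnerProductSpace ℂ H]
    (T : H →ₗ.[ℂ] H) (c : ℂ) : Submodule ℂ H where
  carrier := {u | ∀ f : T.domain, (inner ℂ u (T f) : ℂ) = inner ℂ (c • u) (f : H)}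
  zero_mem' := by intro f; simp
  add_mem' := by
    intro a b ha hb f
    simp only [smul_add, inner_add_left, ha f, hb f]
  smul_mem' := by
    intro r u hu f
    have h := hu f
    simp only [inner_smul_left, h, smul_comm r]
    ring

open MeasureTheory Filter Complex
open scoped ENNReal ComplexConjugate Topology

namespace S7

variable {ω : Measure ℝ}

/-- product of two L² functions is integrable -/
lemma mul_int {f g : ℝ → ℂ} (hf : MemLp f 2 ω) (hg : MemLp g 2 ω) :
    Integrable (fun l => f l * g l) ω := by
  have h1 : Integrable (fun l => ‖f l‖ ^ 2) ω := hf.norm.integrable_sq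
  have h2 : Integrable (fun l => ‖g l‖ ^ 2) ω := hg.norm.integrable_sq
  refine Integrable.mono' ((h1.add h2).const_mul (1/2 : ℝ)) (hf.1.mul hg.1) ?_
  refine Eventually.of_forall fun l => ?_
  simp only [Pi.add_apply]
  rw [norm_mul]
  nlinarith [sq_nonneg (‖f l‖ - ‖g l‖), norm_nonneg (f l), norm_nonneg (g l)]

lemma phi_int (hnorm : ∫ lam : ℝ, (1 + lam ^ 2)⁻¹ ∂ω = 1) :
    Integrable (fun l : ℝ => (1 + l ^ 2)⁻¹) ω := by
  by_contra h
  rw [integral_undef h] at hnorm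
  exact one_ne_zero hnorm.symm

lemma one_add_sq_pos (l : ℝ) : (0:ℝ) < 1 + l ^ 2 := by positivity

/-- an L² function with λf ∈ L² is integrable -/
lemma int_of_dom (hφ : Integrable (fun l : ℝ => (1 + l ^ 2)⁻¹) ω) {f : ℝ → ℂ}
    (hf : MemLp f 2 ω) (hlf : MemLp (fun l : ℝ => (l:ℂ) * f l) 2 ω) :
    Integrable f ω := by
  have h1 : Integrable (fun l => ‖f l‖ ^ 2) ω := hf.norm.integrable_sq
  have h2 : Integrable (fun l : ℝ => ‖(l:ℂ) * f l‖ ^ 2) ω := hlf.norm.integrable_sq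
  refine Integrable.mono' (((h1.add h2).add hφ).const_mul (1/2 : ℝ)) hf.1 ?_
  refine Eventually.of_forall fun l => ?_
  simp only [Pi.add_apply]
  have hs := one_add_sq_pos l
  have hn : ‖(l:ℂ) * f l‖ ^ 2 = l^2 * ‖f l‖^2 := by
    rw [norm_mul, mul_pow, Complex.norm_real, Real.norm_eq_abs, _root_.sq_abs]
  rw [hn]
  set t := ‖f l‖ with ht
  have htn : 0 ≤ t := norm_nonneg _
  have hsi : (1 + l^2) * (1 + l^2)⁻¹ = 1 := mul_inv_cancel₀ hs.ne'
  nlinarith [sq_nonneg ((1 + l^2) * t - 1), mul_pos hs hs, sq_nonneg t, sq_nonneg l,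
    mul_nonneg (mul_nonneg hs.le hs.le) (sq_nonneg t)]


section Gz
variable {z : ℂ}

noncomputable def Cz (z : ℂ) : ℝ := 2 + (2 * z.re ^ 2 + 1) / z.im ^ 2

lemma Cz_nonneg (z : ℂ) : 0 ≤ Cz z := by
  unfold Cz; positivity

lemma gz_ne (hz : z.im ≠ 0) (l : ℝ) : (l:ℂ) - z ≠ 0 := by
  intro h
  apply hz
  have : ((l:ℂ) - z).im = 0 := by rw [h]; simp
  simpa using this

lemma normSq_sub (z : ℂ) (l : ℝ) : ‖(l:ℂ) - z‖ ^ 2 = (l - z.re) ^ 2 + z.im ^ 2 := by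
  rw [Complex.sq_norm, Complex.normSq_apply]
  simp
  ring

lemma gz_key (hz : z.im ≠ 0) (l : ℝ) :
    1 + l ^ 2 ≤ Cz z * ((l - z.re) ^ 2 + z.im ^ 2) := by
  have hb2 : 0 < z.im ^ 2 := by positivity
  have hr : (2 * z.re ^ 2 + 1) / z.im ^ 2 * z.im ^ 2 = 2 * z.re ^ 2 + 1 :=
    div_mul_cancel₀ _ hb2.ne'
  have hrn : 0 ≤ (2 * z.re ^ 2 + 1) / z.im ^ 2 := by positivity
  unfold Cz
  nlinarith [sq_nonneg (l - 2 * z.re), mul_nonneg hrn (sq_nonneg (l - z.re)), hr, hb2]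

lemma gz_bound (hz : z.im ≠ 0) (l : ℝ) :
    ‖((l:ℂ) - z)⁻¹‖ ≤ Real.sqrt (Cz z) * Real.sqrt ((1 + l ^ 2)⁻¹) := by
  have hd : 0 < ‖(l:ℂ) - z‖ := norm_pos_iff.mpr (gz_ne hz l)
  have hs := one_add_sq_pos l
  have hd2 : 0 < ‖(l:ℂ) - z‖ ^ 2 := by positivity
  have h1 : (‖(l:ℂ) - z‖ ^ 2)⁻¹ ≤ Cz z * (1 + l ^ 2)⁻¹ := by
    rw [inv_eq_one_div, ← div_eq_mul_inv, div_le_div_iff₀ hd2 hs, one_mul, normSq_sub]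
    exact gz_key hz l
  rw [norm_inv]
  calc ‖(l:ℂ) - z‖⁻¹ = Real.sqrt ((‖(l:ℂ) - z‖ ^ 2)⁻¹) := by
        rw [Real.sqrt_inv, Real.sqrt_sq hd.le]
    _ ≤ Real.sqrt (Cz z * (1 + l ^ 2)⁻¹) := Real.sqrt_le_sqrt h1
    _ = Real.sqrt (Cz z) * Real.sqrt ((1 + l ^ 2)⁻¹) := Real.sqrt_mul (Cz_nonneg z) _

lemma sqrtphi_mem (hφ : Integrable (fun l : ℝ => (1 + l ^ 2)⁻¹) ω) :
    MemLp (fun l : ℝ => Real.sqrt ((1 + l ^ 2)⁻¹)) 2 ω := by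
  have hc : Continuous fun l : ℝ => Real.sqrt ((1 + l ^ 2)⁻¹) :=
    Real.continuous_sqrt.comp (Continuous.inv₀ (by continuity) fun l => (one_add_sq_pos l).ne')
  rw [memLp_two_iff_integrable_sq hc.aestronglyMeasurable]
  exact hφ.congr (Eventually.of_forall fun l =>
    (Real.sq_sqrt (inv_nonneg.mpr (one_add_sq_pos l).le)).symm)

lemma gz_cont (hz : z.im ≠ 0) : Continuous fun l : ℝ => ((l:ℂ) - z)⁻¹ :=
  Continuous.inv₀ (Complex.continuous_ofReal.sub continuous_const) (gz_ne hz)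

lemma gz_mem (hφ : Integrable (fun l : ℝ => (1 + l ^ 2)⁻¹) ω) (hz : z.im ≠ 0) :
    MemLp (fun l : ℝ => ((l:ℂ) - z)⁻¹) 2 ω := by
  refine MemLp.of_le ((sqrtphi_mem hφ).const_mul (Real.sqrt (Cz z)))
    (gz_cont hz).aestronglyMeasurable (Eventually.of_forall fun l => ?_)
  have hb : (0:ℝ) ≤ Real.sqrt (Cz z) * Real.sqrt ((1 + l ^ 2)⁻¹) := by positivity
  rw [Real.norm_of_nonneg hb]
  exact gz_bound hz l

lemma gz_split (hz : z.im ≠ 0) (x : ℂ) (l : ℝ) :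
    (l:ℂ) * (((l:ℂ) - z)⁻¹ * x) = x + z * (((l:ℂ) - z)⁻¹ * x) := by
  have h := gz_ne hz l
  field_simp
  ring

lemma gz_conj (z : ℂ) (l : ℝ) :
    (starRingEnd ℂ) (((l:ℂ) - z)⁻¹) = ((l:ℂ) - (starRingEnd ℂ) z)⁻¹ := by
  rw [map_inv₀, map_sub, Complex.conj_ofReal]

end Gz

section Pairing

lemma phiR_mem (hφ : Integrable (fun l : ℝ => (1 + l ^ 2)⁻¹) ω) :
    MemLp (fun l : ℝ => (1 + l ^ 2)⁻¹) 2 ω := by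
  have hc : Continuous fun l : ℝ => ((1 + l ^ 2)⁻¹ : ℝ) :=
    Continuous.inv₀ (by continuity) fun l => (one_add_sq_pos l).ne'
  rw [memLp_two_iff_integrable_sq hc.aestronglyMeasurable]
  refine Integrable.mono' hφ (hc.pow 2).aestronglyMeasurable (Eventually.of_forall fun l => ?_)
  have hs := one_add_sq_pos l
  have h1 : (1 + l ^ 2)⁻¹ ≤ 1 := by
    rw [inv_le_one_iff₀]; right; nlinarith
  have h0 : (0:ℝ) ≤ (1 + l ^ 2)⁻¹ := by positivity
  rw [Real.norm_of_nonneg (by positivity)]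
  nlinarith

lemma psiR_mem (hφ : Integrable (fun l : ℝ => (1 + l ^ 2)⁻¹) ω) :
    MemLp (fun l : ℝ => l * (1 + l ^ 2)⁻¹) 2 ω := by
  have hc : Continuous fun l : ℝ => l * (1 + l ^ 2)⁻¹ :=
    continuous_id.mul (Continuous.inv₀ (by continuity) fun l => (one_add_sq_pos l).ne')
  rw [memLp_two_iff_integrable_sq hc.aestronglyMeasurable]
  refine Integrable.mono' hφ (hc.pow 2).aestronglyMeasurable (Eventually.of_forall fun l => ?_)
  have hs := one_add_sq_pos l
  have hsi : (1 + l ^ 2) * (1 + l ^ 2)⁻¹ = 1 := mul_inv_cancel₀ hs.ne'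
  have h0 : (0:ℝ) ≤ (1 + l ^ 2)⁻¹ := by positivity
  rw [Real.norm_of_nonneg (by positivity)]
  nlinarith [sq_nonneg ((1 + l ^ 2)⁻¹), sq_nonneg l, mul_nonneg h0 h0]

lemma phiC_mem (hφ : Integrable (fun l : ℝ => (1 + l ^ 2)⁻¹) ω) :
    MemLp (fun l : ℝ => (((1 + l ^ 2)⁻¹ : ℝ) : ℂ)) 2 ω := (phiR_mem hφ).ofReal

lemma psiC_mem (hφ : Integrable (fun l : ℝ => (1 + l ^ 2)⁻¹) ω) :
    MemLp (fun l : ℝ => ((l * (1 + l ^ 2)⁻¹ : ℝ) : ℂ)) 2 ω := (psiR_mem hφ).ofReal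

/-- `∫ x = ⟪Φ, x⟫ + ⟪Ψ, y⟫` whenever `y = λ·x` a.e. -/
lemma pairing (hφ : Integrable (fun l : ℝ => (1 + l ^ 2)⁻¹) ω) (x y : Lp ℂ 2 ω)
    (hxy : (y : ℝ → ℂ) =ᵐ[ω] fun l : ℝ => (l:ℂ) * (x : ℝ → ℂ) l) :
    ∫ l, (x : ℝ → ℂ) l ∂ω
      = (inner ℂ ((phiC_mem hφ).toLp _) x : ℂ) + inner ℂ ((psiC_mem hφ).toLp _) y := by
  have hxm : MemLp (fun l : ℝ => (l:ℂ) * (x : ℝ → ℂ) l) 2 ω :=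
    (memLp_congr_ae hxy).mp (Lp.memLp y)
  rw [L2.inner_def, L2.inner_def]
  simp only [RCLike.inner_apply']
  have h1 : ∫ l, (starRingEnd ℂ) (((phiC_mem hφ).toLp _ : ℝ → ℂ) l) * (x : ℝ → ℂ) l ∂ω
      = ∫ l, (((1 + l ^ 2)⁻¹ : ℝ) : ℂ) * (x : ℝ → ℂ) l ∂ω := by
    refine integral_congr_ae ?_
    filter_upwards [(phiC_mem hφ).coeFn_toLp] with l hl
    rw [hl, Complex.conj_ofReal]
  have h2 : ∫ l, (starRingEnd ℂ) (((psiC_mem hφ).toLp _ : ℝ → ℂ) l) * (y : ℝ → ℂ) l ∂ω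
      = ∫ l, ((l * (1 + l ^ 2)⁻¹ : ℝ) : ℂ) * ((l:ℂ) * (x : ℝ → ℂ) l) ∂ω := by
    refine integral_congr_ae ?_
    filter_upwards [(psiC_mem hφ).coeFn_toLp, hxy] with l hl hxl
    rw [hl, Complex.conj_ofReal, hxl]
  rw [h1, h2, ← integral_add (mul_int (phiC_mem hφ) (Lp.memLp x)) (mul_int (psiC_mem hφ) hxm)]
  refine integral_congr_ae (Eventually.of_forall fun l => ?_)
  have hs := one_add_sq_pos l
  have hsc : ((1:ℂ) + (l:ℂ) ^ 2) ≠ 0 := by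
    have : (((1 + l ^ 2 : ℝ)) : ℂ) ≠ 0 := Complex.ofReal_ne_zero.mpr hs.ne'
    push_cast at this
    exact this
  simp only
  push_cast
  field_simp

end Pairing

section Density

lemma iUnion_icc : ⋃ m : ℕ, Set.Icc (-(m:ℝ)) (m:ℝ) = Set.univ := by
  ext l
  simp only [Set.mem_iUnion, Set.mem_Icc, Set.mem_univ, iff_true]
  obtain ⟨m, hm⟩ := exists_nat_ge |l|
  obtain ⟨h1, h2⟩ := abs_le.mp hm
  exact ⟨m, h1, h2⟩

lemma icc_ne_top (hφ : Integrable (fun l : ℝ => (1 + l ^ 2)⁻¹) ω) (m : ℕ) :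
    ω (Set.Icc (-(m:ℝ)) (m:ℝ)) ≠ ⊤ := by
  have hfin : ∫⁻ l, ENNReal.ofReal ((1 + l ^ 2)⁻¹) ∂ω ≠ ⊤ := by
    have h2 := hφ.2
    rw [hasFiniteIntegral_iff_norm] at h2
    refine ne_of_lt (lt_of_le_of_lt (le_of_eq ?_) h2)
    refine lintegral_congr fun l => ?_
    rw [Real.norm_of_nonneg (by positivity)]
  have hcalc : ω (Set.Icc (-(m:ℝ)) (m:ℝ))
      ≤ ENNReal.ofReal (1 + (m:ℝ) ^ 2) * ∫⁻ l, ENNReal.ofReal ((1 + l ^ 2)⁻¹) ∂ω := by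
    calc ω (Set.Icc (-(m:ℝ)) (m:ℝ)) = ∫⁻ _ in Set.Icc (-(m:ℝ)) (m:ℝ), 1 ∂ω := by
          rw [setLIntegral_one]
      _ ≤ ∫⁻ l in Set.Icc (-(m:ℝ)) (m:ℝ),
            ENNReal.ofReal (1 + (m:ℝ) ^ 2) * ENNReal.ofReal ((1 + l ^ 2)⁻¹) ∂ω := by
          refine setLIntegral_mono' measurableSet_Icc fun l hl => ?_
          rw [← ENNReal.ofReal_mul (by positivity), ← ENNReal.ofReal_one]
          refine ENNReal.ofReal_le_ofReal ?_
          have hsq : l ^ 2 ≤ (m:ℝ) ^ 2 := sq_le_sq' hl.1 hl.2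
          have hs := one_add_sq_pos l
          have h1 : (1 + l ^ 2) * (1 + l ^ 2)⁻¹ ≤ (1 + (m:ℝ) ^ 2) * (1 + l ^ 2)⁻¹ :=
            mul_le_mul_of_nonneg_right (by linarith) (by positivity)
          rwa [mul_inv_cancel₀ hs.ne'] at h1
      _ = ENNReal.ofReal (1 + (m:ℝ) ^ 2) * ∫⁻ l in Set.Icc (-(m:ℝ)) (m:ℝ),
            ENNReal.ofReal ((1 + l ^ 2)⁻¹) ∂ω :=
          lintegral_const_mul' _ _ ENNReal.ofReal_ne_top
      _ ≤ ENNReal.ofReal (1 + (m:ℝ) ^ 2) * ∫⁻ l, ENNReal.ofReal ((1 + l ^ 2)⁻¹) ∂ω :=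
          mul_le_mul_right (setLIntegral_le_lintegral _ _) _
  exact ne_top_of_le_ne_top (ENNReal.mul_ne_top ENNReal.ofReal_ne_top hfin) hcalc

lemma icc_tendsto (hinf : ω Set.univ = ⊤) :
    Tendsto (fun m : ℕ => ω (Set.Icc (-(m:ℝ)) (m:ℝ))) atTop (𝓝 ⊤) := by
  have hmono : Monotone fun m : ℕ => Set.Icc (-(m:ℝ)) (m:ℝ) := by
    intro a b hab
    have : (a:ℝ) ≤ (b:ℝ) := by exact_mod_cast hab
    exact Set.Icc_subset_Icc (by linarith) this
  have h := tendsto_measure_iUnion_atTop (μ := ω) hmono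
  rw [iUnion_icc, hinf] at h
  exact h

lemma trunc_tendsto (f : Lp ℂ 2 ω) :
    Tendsto (fun n : ℕ =>
      eLpNorm ((Set.Icc (-(n:ℝ)) (n:ℝ)).indicator (f : ℝ → ℂ) - (f : ℝ → ℂ)) 2 ω)
      atTop (𝓝 0) := by
  set s : ℕ → Set ℝ := fun n => Set.Icc (-(n:ℝ)) (n:ℝ) with hs
  have hind : ∀ n, (s n).indicator (f : ℝ → ℂ) - (f : ℝ → ℂ)
      = -((s n)ᶜ.indicator (f : ℝ → ℂ)) := by
    intro n; funext l
    rw [Pi.sub_apply, Pi.neg_apply]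
    by_cases h : l ∈ s n
    · rw [Set.indicator_of_mem h, Set.indicator_of_notMem (by simp [h] : l ∉ (s n)ᶜ)]
      ring
    · rw [Set.indicator_of_notMem h, Set.indicator_of_mem (by simp [h] : l ∈ (s n)ᶜ)]
      ring
  have hfin : ∫⁻ l, ‖(f : ℝ → ℂ) l‖ₑ ^ (2:ℝ) ∂ω ≠ ⊤ := by
    have h := Lp.eLpNorm_lt_top f
    rw [eLpNorm_eq_lintegral_rpow_enorm_toReal two_ne_zero ENNReal.ofNat_ne_top] at h
    intro htop
    rw [ENNReal.toReal_ofNat] at h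
    rw [htop] at h
    rw [ENNReal.top_rpow_of_pos (by norm_num)] at h
    exact (lt_irrefl _ h).elim
  set ν := ω.withDensity fun l => ‖(f : ℝ → ℂ) l‖ₑ ^ (2:ℝ) with hν
  have hνtot : ν Set.univ ≠ ⊤ := by
    rw [hν, withDensity_apply _ MeasurableSet.univ, Measure.restrict_univ]
    exact hfin
  have hνt : Tendsto (fun n => ν ((s n)ᶜ)) atTop (𝓝 (ν (⋂ n, (s n)ᶜ))) := by
    refine tendsto_measure_iInter_atTop
      (fun n => measurableSet_Icc.compl.nullMeasurableSet) ?_ ⟨0, ?_⟩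
    · intro a b hab
      have hba : (a:ℝ) ≤ b := by exact_mod_cast hab
      exact Set.compl_subset_compl.mpr (Set.Icc_subset_Icc (by linarith) hba)
    · exact ne_top_of_le_ne_top hνtot (measure_mono (Set.subset_univ _))
  have hiempty : ⋂ n, (s n)ᶜ = ∅ := by
    rw [← Set.compl_iUnion, iUnion_icc, Set.compl_univ]
  rw [hiempty, measure_empty] at hνt
  have hcomp : Tendsto (fun n => (ν ((s n)ᶜ)) ^ (1/2 : ℝ)) atTop (𝓝 0) := by
    have hc := (ENNReal.continuous_rpow_const (y := (1/2 : ℝ))).tendsto 0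
    rw [ENNReal.zero_rpow_of_pos (by norm_num)] at hc
    exact hc.comp hνt
  refine hcomp.congr fun n => ?_
  rw [hind n, eLpNorm_neg, eLpNorm_indicator_eq_eLpNorm_restrict measurableSet_Icc.compl,
    eLpNorm_eq_lintegral_rpow_enorm_toReal two_ne_zero ENNReal.ofNat_ne_top, ENNReal.toReal_ofNat,
    hν, withDensity_apply _ measurableSet_Icc.compl]

lemma gz_bound' {z : ℂ} (hz : z.im ≠ 0) (l : ℝ) : ‖((l:ℂ) - z)⁻¹‖ ≤ |z.im|⁻¹ := by
  rw [norm_inv]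
  refine inv_anti₀ (abs_pos.mpr hz) ?_
  have h1 := Complex.abs_im_le_norm ((l:ℂ) - z)
  simpa using h1

end Density

end S7

set_option maxHeartbeats 3000000 in
/-- Theorem 3.4, specialized as in Section 4, of
Gesztesy–Kalton–Makarov–Tsekanovskii.  Let `ω` be a Borel measure on `ℝ` with
`∫ (1+λ²)⁻¹ dω = 1` and `ω(ℝ) = ∞`, let `Ĥ` be multiplication by `λ` in `L²(ℝ;dω)`
with domain `L²(ℝ;(1+λ²)dω)`, and `Ḣ̂` its restriction to
`{f ∈ dom Ĥ : ∫ f dω = 0}`.  Then `Ḣ̂` is densely defined, closed and symmetric with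
deficiency indices `(1,1)`, and for every `z ∈ ℂ∖ℝ`,
`ker(Ḣ̂* - z) = {c (λ-z)⁻¹ : c ∈ ℂ}`. -/
theorem statement7
    (ω : Measure ℝ)
    (hnorm : ∫ lam : ℝ, (1 + lam ^ 2)⁻¹ ∂ω = 1)
    (hinf : ω Set.univ = ⊤)
    (Hhat Hdot : Lp ℂ 2 ω →ₗ.[ℂ] Lp ℂ 2 ω)
    -- Ĥ is multiplication by λ on dom(Ĥ) = L²(ℝ;(1+λ²)dω):
    (hHdom : ∀ f : Lp ℂ 2 ω, f ∈ Hhat.domain ↔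
      MemLp (fun lam : ℝ => (lam : ℂ) * (f : ℝ → ℂ) lam) 2 ω)
    (hHact : ∀ f : Hhat.domain,
      (Hhat f : ℝ → ℂ) =ᵐ[ω] fun lam : ℝ => (lam : ℂ) * ((f : Lp ℂ 2 ω) : ℝ → ℂ) lam)
    -- Ḣ̂ is the restriction of Ĥ to {f ∈ dom Ĥ : ∫ f dω = 0}:
    (hDdom : ∀ f : Lp ℂ 2 ω, f ∈ Hdot.domain ↔
      (f ∈ Hhat.domain ∧ ∫ lam : ℝ, (f : ℝ → ℂ) lam ∂ω = 0))
    (hDact : ∀ f : Hdot.domain,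
      (Hdot f : ℝ → ℂ) =ᵐ[ω] fun lam : ℝ => (lam : ℂ) * ((f : Lp ℂ 2 ω) : ℝ → ℂ) lam) :
    Dense (Hdot.domain : Set (Lp ℂ 2 ω)) ∧
    PMapSymmetric Hdot ∧
    IsClosed (Hdot.graph : Set (Lp ℂ 2 ω × Lp ℂ 2 ω)) ∧
    -- deficiency indices (1,1):
    Module.rank ℂ (defSpace Hdot Complex.I) = 1 ∧
    Module.rank ℂ (defSpace Hdot (-Complex.I)) = 1 ∧
    -- ker(Ḣ̂* - z) = ℂ · (λ - z)⁻¹ for every z ∈ ℂ∖ℝ: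
    (∀ z : ℂ, z.im ≠ 0 → ∀ u : Lp ℂ 2 ω,
      u ∈ defSpace Hdot z ↔
        ∃ c : ℂ, (u : ℝ → ℂ) =ᵐ[ω] fun lam : ℝ => c * ((lam : ℂ) - z)⁻¹) := by
  classical
  have hφ : Integrable (fun l : ℝ => (1 + l ^ 2)⁻¹) ω := S7.phi_int hnorm
  -- ① the deficiency space characterization
  have defchar : ∀ z : ℂ, z.im ≠ 0 → ∀ u : Lp ℂ 2 ω,
      u ∈ defSpace Hdot z ↔
        ∃ c : ℂ, (u : ℝ → ℂ) =ᵐ[ω] fun l : ℝ => c * ((l : ℂ) - z)⁻¹ := by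
    intro z hz u
    have hgm : MemLp (fun l : ℝ => ((l:ℂ) - z)⁻¹) 2 ω := S7.gz_mem hφ hz
    set g : ℝ → ℂ := fun l => ((l:ℂ) - z)⁻¹ with hgdef
    set G : Lp ℂ 2 ω := hgm.toLp g with hGdef
    have hzbar : ((starRingEnd ℂ) z).im ≠ 0 := by simpa using hz
    have hgbarm : MemLp (fun l : ℝ => ((l:ℂ) - (starRingEnd ℂ) z)⁻¹) 2 ω := S7.gz_mem hφ hzbar
    constructor
    · -- u ∈ defSpace → u = c (λ - z)⁻¹
      intro hu
      have hu' : ∀ f : Hdot.domain, (inner ℂ u (Hdot f) : ℂ) = inner ℂ (z • u) (f : Lp ℂ 2 ω) := hu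
      have key : ∀ h : Lp ℂ 2 ω, (inner ℂ G h : ℂ) = 0 → (inner ℂ u h : ℂ) = 0 := by
        intro h hGh
        set fh : ℝ → ℂ := fun l => ((l:ℂ) - (starRingEnd ℂ) z)⁻¹ * (h : ℝ → ℂ) l with hfhdef
        have hfhm : MemLp fh 2 ω := by
          refine MemLp.of_le_mul (c := |((starRingEnd ℂ) z).im|⁻¹) (Lp.memLp h)
            (hgbarm.1.mul (Lp.aestronglyMeasurable h)) (Eventually.of_forall fun l => ?_)
          rw [norm_mul]
          exact mul_le_mul_of_nonneg_right (S7.gz_bound' hzbar l) (norm_nonneg _)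
        have hsplit : (fun l : ℝ => (l:ℂ) * fh l)
            = fun l : ℝ => (h : ℝ → ℂ) l + (starRingEnd ℂ) z * fh l := by
          funext l
          exact S7.gz_split hzbar ((h : ℝ → ℂ) l) l
        have hlfhm : MemLp (fun l : ℝ => (l:ℂ) * fh l) 2 ω := by
          rw [hsplit]
          exact (Lp.memLp h).add (hfhm.const_mul _)
        set F : Lp ℂ 2 ω := hfhm.toLp fh with hFdef
        have hFcoe : (F : ℝ → ℂ) =ᵐ[ω] fh := hfhm.coeFn_toLp
        have hFhat : F ∈ Hhat.domain := by
          rw [hHdom]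
          refine (memLp_congr_ae ?_).mpr hlfhm
          filter_upwards [hFcoe] with l hl
          rw [hl]
        have hFint : ∫ l, (F : ℝ → ℂ) l ∂ω = 0 := by
          have h1 : ∫ l, (F : ℝ → ℂ) l ∂ω = ∫ l, fh l ∂ω := integral_congr_ae hFcoe
          have h2 : (inner ℂ G h : ℂ) = ∫ l, fh l ∂ω := by
            rw [L2.inner_def]
            simp only [RCLike.inner_apply']
            refine integral_congr_ae ?_
            filter_upwards [hgm.coeFn_toLp] with l hl
            simp only [hGdef]
            rw [hl]
            simp only [hgdef, hfhdef]
            rw [S7.gz_conj]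
          rw [h1, ← h2, hGh]
        have hFdot : F ∈ Hdot.domain := (hDdom F).mpr ⟨hFhat, hFint⟩
        -- Hdot F = h + conj z • F
        have hHF : Hdot ⟨F, hFdot⟩ = h + (starRingEnd ℂ) z • F := by
          refine Lp.ext ?_
          filter_upwards [hDact ⟨F, hFdot⟩, hFcoe, Lp.coeFn_add h ((starRingEnd ℂ) z • F),
            Lp.coeFn_smul ((starRingEnd ℂ) z) F] with l h1 h2 h3 h4
          rw [h1, h3, Pi.add_apply, h4, Pi.smul_apply, smul_eq_mul]
          show (l:ℂ) * (F : ℝ → ℂ) l = (h : ℝ → ℂ) l + (starRingEnd ℂ) z * (F : ℝ → ℂ) l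
          rw [h2]
          have := congrFun hsplit l
          simpa using this
        have h5 := hu' ⟨F, hFdot⟩
        rw [hHF] at h5
        simp only [inner_add_right, inner_smul_right, inner_smul_left] at h5
        -- h5 : ⟪u,h⟫ + conj z * ⟪u,F⟫ = conj z * ⟪u,F⟫
        have : (inner ℂ u h : ℂ) = 0 := by
          have hc : (starRingEnd ℂ) z * (inner ℂ u F : ℂ)
              = (starRingEnd ℂ) z * (inner ℂ u F : ℂ) := rfl
          linear_combination h5
        exact this
      -- orthogonality argument
      haveI : FiniteDimensional ℂ (Submodule.span ℂ ({G} : Set (Lp ℂ 2 ω))) :=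
        FiniteDimensional.span_of_finite ℂ (Set.finite_singleton G)
      have humem : u ∈ (Submodule.span ℂ ({G} : Set (Lp ℂ 2 ω)))ᗮᗮ := by
        rw [Submodule.mem_orthogonal]
        intro h hmem
        have hGh : (inner ℂ G h : ℂ) = 0 := by
          have := Submodule.mem_orthogonal_singleton_iff_inner_left.mp hmem
          rw [← inner_conj_symm, this, map_zero]
        rw [← inner_conj_symm, key h hGh, map_zero]
      rw [Submodule.orthogonal_orthogonal] at humem
      obtain ⟨c, hc⟩ := Submodule.mem_span_singleton.mp humem
      refine ⟨c, ?_⟩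
      filter_upwards [Lp.coeFn_smul c G, hgm.coeFn_toLp] with l h1 h2
      rw [← hc, h1, Pi.smul_apply, smul_eq_mul]
      simp only [hGdef]
      rw [h2]
    · -- u = c (λ - z)⁻¹ → u ∈ defSpace
      rintro ⟨c, hc⟩
      intro f
      set x : Lp ℂ 2 ω := (f : Lp ℂ 2 ω) with hxdef
      obtain ⟨hxhat, hxint⟩ := (hDdom x).mp f.2
      have hxI : Integrable (x : ℝ → ℂ) ω := S7.int_of_dom hφ (Lp.memLp x) ((hHdom x).mp hxhat)
      have hgxI : Integrable (fun l : ℝ => ((l:ℂ) - (starRingEnd ℂ) z)⁻¹ * (x : ℝ → ℂ) l) ω :=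
        S7.mul_int hgbarm (Lp.memLp x)
      have e1 : (inner ℂ u (Hdot f) : ℂ)
          = ∫ l : ℝ, ((starRingEnd ℂ) c * (x : ℝ → ℂ) l
              + ((starRingEnd ℂ) c * (starRingEnd ℂ) z)
                * (((l:ℂ) - (starRingEnd ℂ) z)⁻¹ * (x : ℝ → ℂ) l)) ∂ω := by
        rw [L2.inner_def]
        simp only [RCLike.inner_apply']
        refine integral_congr_ae ?_
        filter_upwards [hDact f, hc] with l h1 h2
        rw [h1, h2]
        have hsp := S7.gz_split hzbar ((x : ℝ → ℂ) l) l
        rw [map_mul, S7.gz_conj]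
        calc (starRingEnd ℂ) c * ((l:ℂ) - (starRingEnd ℂ) z)⁻¹ * ((l:ℂ) * (x : ℝ → ℂ) l)
            = (starRingEnd ℂ) c * ((l:ℂ) * (((l:ℂ) - (starRingEnd ℂ) z)⁻¹ * (x : ℝ → ℂ) l)) := by
              ring
          _ = _ := by rw [hsp]; ring
      have e2 : (inner ℂ (z • u) (x : Lp ℂ 2 ω) : ℂ)
          = (starRingEnd ℂ) z * ∫ l : ℝ, ((starRingEnd ℂ) c
              * (((l:ℂ) - (starRingEnd ℂ) z)⁻¹ * (x : ℝ → ℂ) l)) ∂ω := by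
        rw [inner_smul_left, L2.inner_def]
        simp only [RCLike.inner_apply]
        congr 1
        refine integral_congr_ae ?_
        filter_upwards [hc] with l h2
        rw [h2, map_mul, S7.gz_conj]
        ring
      rw [e1, e2, integral_add (hxI.const_mul _) (hgxI.const_mul _), integral_const_mul,
        integral_const_mul, integral_const_mul, hxint, mul_zero, zero_add]
      ring

  -- ② ranks
  have rank1 : ∀ z : ℂ, z.im ≠ 0 → Module.rank ℂ (defSpace Hdot z) = 1 := by
    intro z hz
    have hgm : MemLp (fun l : ℝ => ((l:ℂ) - z)⁻¹) 2 ω := S7.gz_mem hφ hz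
    set G : Lp ℂ 2 ω := hgm.toLp _ with hGdef
    have hGne : G ≠ 0 := by
      intro h0
      have hae : (fun l : ℝ => ((l:ℂ) - z)⁻¹) =ᵐ[ω] (fun _ => (0:ℂ)) := by
        refine (MemLp.toLp_eq_toLp_iff hgm (MemLp.zero' : MemLp (fun _ : ℝ => (0:ℂ)) 2 ω)).mp ?_
        exact h0.trans (MemLp.toLp_zero _).symm
      haveI : (ae ω).NeBot := by
        refine ae_neBot.mpr fun h0' => ?_
        rw [h0'] at hinf
        simp at hinf
      obtain ⟨l, hl⟩ := hae.exists
      exact inv_ne_zero (S7.gz_ne hz l) hl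
    have hset : defSpace Hdot z = Submodule.span ℂ ({G} : Set (Lp ℂ 2 ω)) := by
      ext u
      rw [defchar z hz u, Submodule.mem_span_singleton]
      constructor
      · rintro ⟨c, hc⟩
        refine ⟨c, Lp.ext ?_⟩
        filter_upwards [Lp.coeFn_smul c G, hgm.coeFn_toLp, hc] with l h1 h2 h3
        rw [h1, Pi.smul_apply, smul_eq_mul]
        simp only [hGdef]
        rw [h2, h3]
      · rintro ⟨c, hc⟩
        refine ⟨c, ?_⟩
        filter_upwards [Lp.coeFn_smul c G, hgm.coeFn_toLp] with l h1 h2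
        rw [← hc, h1, Pi.smul_apply, smul_eq_mul]
        simp only [hGdef]
        rw [h2]
    rw [hset]
    haveI := FiniteDimensional.span_of_finite ℂ (Set.finite_singleton G)
    rw [← Module.finrank_eq_rank, finrank_span_singleton hGne, Nat.cast_one]
  -- ③ symmetry
  have hsymm : PMapSymmetric Hdot := by
    intro uu vv
    rw [L2.inner_def, L2.inner_def]
    simp only [RCLike.inner_apply]
    refine integral_congr_ae ?_
    filter_upwards [hDact uu, hDact vv] with l h1 h2
    rw [h1, h2, map_mul, Complex.conj_ofReal]
    ring
  -- ④ density
  have hdense : Dense (Hdot.domain : Set (Lp ℂ 2 ω)) := by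
    rw [Metric.dense_iff]
    intro f r hr
    have htr := S7.trunc_tendsto (ω := ω) f
    have hev : ∀ᶠ n : ℕ in atTop,
        eLpNorm ((Set.Icc (-(n:ℝ)) (n:ℝ)).indicator (f : ℝ → ℂ) - (f : ℝ → ℂ)) 2 ω
          < ENNReal.ofReal (r/2) :=
      htr.eventually_lt_const (ENNReal.ofReal_pos.mpr (by linarith))
    obtain ⟨n, hn⟩ := hev.exists
    set s : Set ℝ := Set.Icc (-(n:ℝ)) (n:ℝ) with hsdef
    set fn : ℝ → ℂ := s.indicator (f : ℝ → ℂ) with hfndef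
    have hfnm : MemLp fn 2 ω := (Lp.memLp f).indicator measurableSet_Icc
    set F : Lp ℂ 2 ω := hfnm.toLp fn with hFdef
    have hFcoe : (F : ℝ → ℂ) =ᵐ[ω] fn := hfnm.coeFn_toLp
    have hlfn : MemLp (fun l : ℝ => (l:ℂ) * fn l) 2 ω := by
      refine MemLp.of_le_mul (c := (n:ℝ)) (Lp.memLp f)
        (Complex.continuous_ofReal.aestronglyMeasurable.mul hfnm.1)
        (Eventually.of_forall fun l => ?_)
      by_cases hls : l ∈ s
      · have hfl : fn l = (f : ℝ → ℂ) l := by rw [hfndef]; exact Set.indicator_of_mem hls _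
        rw [hfl, norm_mul, Complex.norm_real, Real.norm_eq_abs]
        exact mul_le_mul_of_nonneg_right (abs_le.mpr ⟨hls.1, hls.2⟩) (norm_nonneg _)
      · have hfl : fn l = 0 := by rw [hfndef]; exact Set.indicator_of_notMem hls _
        rw [hfl, mul_zero, norm_zero]
        positivity
    have hFhat : F ∈ Hhat.domain := by
      rw [hHdom]
      refine (memLp_congr_ae ?_).mpr hlfn
      filter_upwards [hFcoe] with l hl
      rw [hl]
    have hfnI : Integrable fn ω := S7.int_of_dom hφ hfnm hlfn
    set c0 : ℂ := ∫ l, fn l ∂ω with hc0def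
    set M : ℝ := (‖c0‖ / (r/2) + 1)^2 + 1 with hMdef
    have hev2 : ∀ᶠ m : ℕ in atTop,
        ENNReal.ofReal M < ω (Set.Icc (-(m:ℝ)) (m:ℝ)) :=
      (S7.icc_tendsto (ω := ω) hinf).eventually_const_lt ENNReal.ofReal_lt_top
    obtain ⟨m, hm⟩ := hev2.exists
    have hfin := S7.icc_ne_top hφ m
    set t : ℝ := (ω (Set.Icc (-(m:ℝ)) (m:ℝ))).toReal with htdef
    have htM : M < t := by
      have h := (ENNReal.toReal_lt_toReal ENNReal.ofReal_ne_top hfin).mpr hm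
      rwa [ENNReal.toReal_ofReal (by positivity)] at h
    have htpos : 0 < t := lt_of_le_of_lt (by positivity) htM
    set E : Lp ℂ 2 ω := indicatorConstLp 2 measurableSet_Icc hfin ((t⁻¹ : ℝ) : ℂ) with hEdef
    have hEcoe : (E : ℝ → ℂ) =ᵐ[ω] (Set.Icc (-(m:ℝ)) (m:ℝ)).indicator fun _ => ((t⁻¹ : ℝ) : ℂ) :=
      indicatorConstLp_coeFn
    have hEhat : E ∈ Hhat.domain := by
      rw [hHdom]
      refine MemLp.of_le_mul (c := (m:ℝ)) (Lp.memLp E)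
        (Complex.continuous_ofReal.aestronglyMeasurable.mul (Lp.aestronglyMeasurable E)) ?_
      filter_upwards [hEcoe] with l hl
      by_cases hls : l ∈ Set.Icc (-(m:ℝ)) (m:ℝ)
      · rw [norm_mul, Complex.norm_real, Real.norm_eq_abs]
        exact mul_le_mul_of_nonneg_right (abs_le.mpr ⟨hls.1, hls.2⟩) (norm_nonneg _)
      · rw [hl, Set.indicator_of_notMem hls]
        simp
    have hEint : ∫ l, (E : ℝ → ℂ) l ∂ω = 1 := by
      rw [integral_congr_ae hEcoe, integral_indicator_const _ measurableSet_Icc, measureReal_def, ← htdef,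
        Complex.real_smul, ← Complex.ofReal_mul, mul_inv_cancel₀ htpos.ne', Complex.ofReal_one]
    have hEnorm : ‖E‖ = t⁻¹ * t ^ (1/2 : ℝ) := by
      rw [hEdef, norm_indicatorConstLp two_ne_zero ENNReal.ofNat_ne_top, measureReal_def, ← htdef]
      have h2t : (1 / (2:ℝ≥0∞).toReal) = (1/2 : ℝ) := by norm_num
      rw [h2t, Complex.norm_real, Real.norm_eq_abs, _root_.abs_of_nonneg (inv_nonneg.mpr htpos.le)]
    have hsm : ‖c0‖ * ‖E‖ < r/2 := by
      rw [hEnorm]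
      set T : ℝ := Real.sqrt t with hTdef
      have hT2 : T ^ 2 = t := Real.sq_sqrt htpos.le
      have hTpos : 0 < T := Real.sqrt_pos.mpr htpos
      have hTrpow : t ^ (1/2 : ℝ) = T := by
        rw [hTdef, Real.sqrt_eq_rpow]
      have hTM : ‖c0‖ / (r/2) + 1 < T := by
        refine lt_of_pow_lt_pow_left₀ 2 hTpos.le ?_
        rw [hT2]
        rw [hMdef] at htM
        linarith
      rw [hTrpow, ← hT2]
      have hrw : ‖c0‖ * ((T^2)⁻¹ * T) = ‖c0‖ / T := by
        field_simp
      rw [hrw, div_lt_iff₀ hTpos]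
      have h0 : 0 < r/2 := by linarith
      have h1 := mul_lt_mul_of_pos_left hTM h0
      have h2 : r/2 * (‖c0‖/(r/2) + 1) = ‖c0‖ + r/2 := by
        field_simp
      rw [h2] at h1
      nlinarith
    set gEl : Lp ℂ 2 ω := F - c0 • E with hgEldef
    have hgcoe : (gEl : ℝ → ℂ) =ᵐ[ω] fun l => fn l - c0 * (E : ℝ → ℂ) l := by
      filter_upwards [Lp.coeFn_sub F (c0 • E), Lp.coeFn_smul c0 E, hFcoe] with l h1 h2 h3
      rw [hgEldef, h1, Pi.sub_apply, h3, h2, Pi.smul_apply, smul_eq_mul]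
    have hEI : Integrable (E : ℝ → ℂ) ω := S7.int_of_dom hφ (Lp.memLp E) ((hHdom E).mp hEhat)
    have hgdom : gEl ∈ Hdot.domain := by
      rw [hDdom]
      refine ⟨Submodule.sub_mem _ hFhat (Submodule.smul_mem _ _ hEhat), ?_⟩
      rw [integral_congr_ae hgcoe, integral_sub hfnI (hEI.const_mul c0), integral_const_mul,
        hEint, ← hc0def]
      ring
    refine ⟨gEl, Set.mem_inter ?_ hgdom⟩
    rw [Metric.mem_ball]
    have hd1 : dist F f < r/2 := by
      have hcong : eLpNorm ((F : ℝ → ℂ) - (f : ℝ → ℂ)) 2 ω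
          = eLpNorm (fn - (f : ℝ → ℂ)) 2 ω := by
        refine eLpNorm_congr_ae ?_
        filter_upwards [hFcoe] with l hl
        rw [Pi.sub_apply, Pi.sub_apply, hl]
      rw [Lp.dist_def, hcong]
      have hne : eLpNorm (fn - (f : ℝ → ℂ)) 2 ω ≠ ⊤ := hn.ne_top
      have := (ENNReal.toReal_lt_toReal hne ENNReal.ofReal_ne_top).mpr hn
      rwa [ENNReal.toReal_ofReal (by linarith)] at this
    have hd2 : dist gEl F = ‖c0‖ * ‖E‖ := by
      rw [dist_eq_norm, hgEldef]
      have : F - c0 • E - F = -(c0 • E) := by abel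
      rw [this, norm_neg, norm_smul]
    calc dist gEl f ≤ dist gEl F + dist F f := dist_triangle _ _ _
      _ < r/2 + r/2 := by
          rw [hd2]
          exact add_lt_add hsm hd1
      _ = r := by ring
  -- ⑤ closedness
  have hclosed : IsClosed (Hdot.graph : Set (Lp ℂ 2 ω × Lp ℂ 2 ω)) := by
    refine IsSeqClosed.isClosed ?_
    intro p q hp hq
    choose w hw1 hw2 using fun n => Hdot.mem_graph_iff.mp (hp n)
    have h1 : Tendsto (fun n => ((w n : Lp ℂ 2 ω))) atTop (𝓝 q.1) :=
      hq.fst_nhds.congr fun n => (hw1 n).symm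
    have h2 : Tendsto (fun n => (Hdot (w n) : Lp ℂ 2 ω)) atTop (𝓝 q.2) :=
      hq.snd_nhds.congr fun n => (hw2 n).symm
    obtain ⟨ns, hns, hae1⟩ := (tendstoInMeasure_of_tendsto_Lp h1).exists_seq_tendsto_ae
    have h2' : Tendsto (fun k => (Hdot (w (ns k)) : Lp ℂ 2 ω)) atTop (𝓝 q.2) :=
      h2.comp hns.tendsto_atTop
    obtain ⟨ms, hms, hae2⟩ := (tendstoInMeasure_of_tendsto_Lp h2').exists_seq_tendsto_ae
    have haeall : ∀ᵐ l ∂ω, ∀ n, ((Hdot (w n) : Lp ℂ 2 ω) : ℝ → ℂ) l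
        = (l:ℂ) * (((w n : Lp ℂ 2 ω)) : ℝ → ℂ) l := ae_all_iff.mpr fun n => hDact (w n)
    have hkey : (q.2 : ℝ → ℂ) =ᵐ[ω] fun l => (l:ℂ) * (q.1 : ℝ → ℂ) l := by
      filter_upwards [hae1, hae2, haeall] with l hl1 hl2 hl3
      have hA : Tendsto (fun k => (l:ℂ) * (((w (ns (ms k)) : Lp ℂ 2 ω)) : ℝ → ℂ) l) atTop
          (𝓝 ((l:ℂ) * (q.1 : ℝ → ℂ) l)) :=
        tendsto_const_nhds.mul (hl1.comp hms.tendsto_atTop)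
      have hB : Tendsto (fun k => ((Hdot (w (ns (ms k))) : Lp ℂ 2 ω) : ℝ → ℂ) l) atTop
          (𝓝 ((q.2 : ℝ → ℂ) l)) := hl2
      have hAB : (fun k => ((Hdot (w (ns (ms k))) : Lp ℂ 2 ω) : ℝ → ℂ) l)
          = fun k => (l:ℂ) * (((w (ns (ms k)) : Lp ℂ 2 ω)) : ℝ → ℂ) l :=
        funext fun k => hl3 _
      rw [hAB] at hB
      exact tendsto_nhds_unique hB hA
    have hq1hat : q.1 ∈ Hhat.domain := (hHdom q.1).mpr ((memLp_congr_ae hkey).mp (Lp.memLp q.2))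
    have hzero : ∀ n, (inner ℂ ((S7.phiC_mem hφ).toLp _) ((w n : Lp ℂ 2 ω)) : ℂ)
        + inner ℂ ((S7.psiC_mem hφ).toLp _) (Hdot (w n)) = 0 := by
      intro n
      have hp0 := (S7.pairing hφ ((w n : Lp ℂ 2 ω)) (Hdot (w n)) (hDact (w n))).symm
      rwa [((hDdom _).mp (w n).2).2] at hp0
    have hlim : Tendsto (fun n => (inner ℂ ((S7.phiC_mem hφ).toLp _) ((w n : Lp ℂ 2 ω)) : ℂ)
        + inner ℂ ((S7.psiC_mem hφ).toLp _) (Hdot (w n))) atTop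
        (𝓝 ((inner ℂ ((S7.phiC_mem hφ).toLp _) q.1 : ℂ) + inner ℂ ((S7.psiC_mem hφ).toLp _) q.2)) :=
      (tendsto_const_nhds.inner h1).add (tendsto_const_nhds.inner h2)
    have hfun : (fun n => (inner ℂ ((S7.phiC_mem hφ).toLp _) ((w n : Lp ℂ 2 ω)) : ℂ)
        + inner ℂ ((S7.psiC_mem hφ).toLp _) (Hdot (w n))) = fun _ => (0:ℂ) := funext hzero
    rw [hfun] at hlim
    have hsum0 : (inner ℂ ((S7.phiC_mem hφ).toLp _) q.1 : ℂ)
        + inner ℂ ((S7.psiC_mem hφ).toLp _) q.2 = 0 :=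
      tendsto_nhds_unique hlim tendsto_const_nhds
    have hq1int : ∫ l, (q.1 : ℝ → ℂ) l ∂ω = 0 := by
      rw [S7.pairing hφ q.1 q.2 hkey]
      exact hsum0
    have hq1dom : q.1 ∈ Hdot.domain := (hDdom q.1).mpr ⟨hq1hat, hq1int⟩
    refine Hdot.mem_graph_iff.mpr ⟨⟨q.1, hq1dom⟩, rfl, ?_⟩
    refine Lp.ext ?_
    filter_upwards [hDact ⟨q.1, hq1dom⟩, hkey] with l hA hB
    rw [hA]
    exact hB.symm
  exact ⟨hdense, hsymm, hclosed, rank1 Complex.I (by simp), rank1 (-Complex.I) (by simp), defchar⟩
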